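/- Let A and B be symmetric n×n matrices. Let μ_1(A) ≥ … ≥ μ_n(A) be the eigenvalues of A with corresponding orthonormal eigenvectors ν_1,…,ν_n, and set b = max_{i,j=1,…,n} |ν_i' B ν_j|. Then for every r ∈ {1,…,n}, μ_r(A+B) ≥ μ_r(A) − r·b. -/

import Mathlib

open Matrix MeasureTheory
open scoped BigOperators

/-- Squared Frobenius (Hilbert–Schmidt) norm of a real matrix. -/
noncomputable def frobSq {n m : ℕ} (A : Matrix (Fin n) (Fin m) ℝ) : ℝ :=
  Matrix.trace (A * Aᵀ)

/-- Operator (spectral) norm of a real matrix. -/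
noncomputable def opNorm {n m : ℕ} (A : Matrix (Fin n) (Fin m) ℝ) : ℝ :=
  ‖LinearMap.toContinuousLinearMap (Matrix.toEuclideanLin A)‖

/-- Orthogonal projection matrix onto the column space of `A`. -/
noncomputable def projMat {n m : ℕ} (A : Matrix (Fin n) (Fin m) ℝ) : Matrix (Fin n) (Fin n) ℝ :=
  Matrix.toEuclideanLin.symm
    (((LinearMap.range (Matrix.toEuclideanLin A)).subtypeL.comp
      (Submodule.orthogonalProjectionOnto (LinearMap.range (Matrix.toEuclideanLin A))) :
        EuclideanSpace ℝ (Fin n) →L[ℝ] EuclideanSpace ℝ (Fin n)) :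
        EuclideanSpace ℝ (Fin n) →ₗ[ℝ] EuclideanSpace ℝ (Fin n))

/-- Annihilator `M_A = I - P_A`. -/
noncomputable def annMat {n m : ℕ} (A : Matrix (Fin n) (Fin m) ℝ) : Matrix (Fin n) (Fin n) ℝ :=
  1 - projMat A

/-- `mu S r` is the `r`-th largest eigenvalue (1-based, with multiplicity) of the
symmetric matrix `S`; it is `0` if `S` is not symmetric or `r ∉ {1,…,n}`. -/
noncomputable def mu {n : ℕ} (S : Matrix (Fin n) (Fin n) ℝ) (r : ℕ) : ℝ :=
  if h : S.IsHermitian ∧ 1 ≤ r ∧ r ≤ n then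
    (h.1.eigenvalues ∘ Tuple.sort h.1.eigenvalues)
      (Fin.rev ⟨r - 1, by obtain ⟨-, h1, h2⟩ := h; omega⟩)
  else 0

private lemma sum_dot' {n : ℕ} {ι : Type*} [Fintype ι] (c : ι → ℝ) (p : ι → Fin n → ℝ)
    (w : Fin n → ℝ) : (∑ i, c i • p i) ⬝ᵥ w = ∑ i, c i * (p i ⬝ᵥ w) := by
  simp only [dotProduct, Finset.sum_apply, Pi.smul_apply, smul_eq_mul,
    Finset.sum_mul, Finset.mul_sum, mul_assoc]
  exact Finset.sum_comm

private lemma dot_sum' {n : ℕ} {ι : Type*} [Fintype ι] (c : ι → ℝ) (p : ι → Fin n → ℝ)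
    (w : Fin n → ℝ) : w ⬝ᵥ (∑ i, c i • p i) = ∑ i, c i * (w ⬝ᵥ p i) := by
  simp only [dotProduct, Finset.sum_apply, Pi.smul_apply, smul_eq_mul,
    Finset.sum_mul, Finset.mul_sum]
  rw [Finset.sum_comm]
  refine Finset.sum_congr rfl fun i _ => Finset.sum_congr rfl fun k _ => by ring

private lemma expand_quad' {n : ℕ} {ι : Type*} [Fintype ι] (M : Matrix (Fin n) (Fin n) ℝ)
    (p : ι → Fin n → ℝ) (c : ι → ℝ) :
    (∑ i, c i • p i) ⬝ᵥ M.mulVec (∑ j, c j • p j)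
      = ∑ i, ∑ j, c i * c j * (p i ⬝ᵥ M.mulVec (p j)) := by
  have h1 : M.mulVec (∑ j, c j • p j) = ∑ j, c j • M.mulVec (p j) := by
    simp only [← Matrix.mulVecLin_apply, map_sum, LinearMap.map_smul]
  rw [h1, dot_sum']
  simp only [sum_dot', Finset.mul_sum]
  rw [Finset.sum_comm]
  refine Finset.sum_congr rfl fun i _ => Finset.sum_congr rfl fun j _ => by ring

private lemma expand_dot' {n : ℕ} {ι : Type*} [Fintype ι]
    (p : ι → Fin n → ℝ) (c : ι → ℝ) :
    (∑ i, c i • p i) ⬝ᵥ (∑ j, c j • p j)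
      = ∑ i, ∑ j, c i * c j * (p i ⬝ᵥ p j) := by
  have := expand_quad' (1 : Matrix (Fin n) (Fin n) ℝ) p c
  simpa [Matrix.one_mulVec] using this

private lemma collapse' {ι : Type*} [Fintype ι] [DecidableEq ι] (c t : ι → ℝ)
    (e : ι → ι → ℝ) (he : ∀ i j, e i j = t j * (if i = j then 1 else 0)) :
    ∑ i, ∑ j, c i * c j * e i j = ∑ i, c i * c i * t i := by
  refine Finset.sum_congr rfl fun i _ => ?_
  rw [Finset.sum_eq_single i]
  · rw [he i i]; simp
  · intro j _ hj; rw [he i j]; simp [Ne.symm hj]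
  · intro h; exact absurd (Finset.mem_univ i) h

private lemma inner_eq_dot' {n : ℕ} (x y : EuclideanSpace ℝ (Fin n)) :
    (inner ℝ x y : ℝ) = x ⬝ᵥ y := by
  simp [PiLp.inner_apply, dotProduct, RCLike.inner_apply, mul_comm]

private lemma mu_eq' {n : ℕ} (S : Matrix (Fin n) (Fin n) ℝ) (hS : S.IsHermitian) (s : ℕ)
    (h1 : 1 ≤ s) (h2 : s ≤ n) :
    mu S s = hS.eigenvalues (Tuple.sort hS.eigenvalues ⟨n - s, by omega⟩) := by
  rw [mu, dif_pos (⟨hS, h1, h2⟩ : S.IsHermitian ∧ 1 ≤ s ∧ s ≤ n)]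
  simp only [Function.comp_apply]
  exact congrArg _ (congrArg _ (Fin.ext (by simp [Fin.val_rev]; omega)))

set_option maxHeartbeats 2000000 in
/-- Let A, B be symmetric n×n matrices with orthonormal eigenvectors
ν_1,…,ν_n of A (for the decreasingly ordered eigenvalues) and b = max_{i,j} |ν_i' B ν_j|.
Then μ_r(A+B) ≥ μ_r(A) − r·b for every r ∈ {1,…,n}. -/
theorem statement9 {n : ℕ} (A B : Matrix (Fin n) (Fin n) ℝ)
    (hA : A.IsHermitian) (hB : B.IsHermitian)
    (ν : ℕ → (Fin n → ℝ))
    (hortho : ∀ i ∈ Finset.Icc 1 n, ∀ j ∈ Finset.Icc 1 n,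
      ν i ⬝ᵥ ν j = if i = j then (1 : ℝ) else 0)
    (heig : ∀ i ∈ Finset.Icc 1 n, A.mulVec (ν i) = mu A i • ν i)
    (b : ℝ)
    (hb : IsGreatest {x : ℝ | ∃ i ∈ Finset.Icc 1 n, ∃ j ∈ Finset.Icc 1 n,
      x = |ν i ⬝ᵥ B.mulVec (ν j)|} b) :
    ∀ r ∈ Finset.Icc 1 n, mu (A + B) r ≥ mu A r - (r : ℝ) * b := by
  intro r hr
  rw [Finset.mem_Icc] at hr
  obtain ⟨hr1, hrn⟩ := hr
  have hS : (A + B).IsHermitian := hA.add hB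
  obtain ⟨⟨i0, hi0, j0, hj0, hb0⟩, hbub⟩ := hb
  have hbnn : 0 ≤ b := hb0 ▸ abs_nonneg _
  -- sorted eigenvalue data of A + B
  set σ : Equiv.Perm (Fin n) := Tuple.sort hS.eigenvalues with hσ
  set lam : Fin n → ℝ := fun k => hS.eigenvalues (σ k) with hlam
  have hlam_mono : Monotone lam := Tuple.monotone_sort hS.eigenvalues
  set u : Fin n → (Fin n → ℝ) := fun k => hS.eigenvectorBasis (σ k) with hu
  set uE : Fin n → EuclideanSpace ℝ (Fin n) := fun k => hS.eigenvectorBasis (σ k) with huE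
  have hu_orth : Orthonormal ℝ uE :=
    hS.eigenvectorBasis.orthonormal.comp σ σ.injective
  have hu_dot : ∀ k l, u k ⬝ᵥ u l = if k = l then (1:ℝ) else 0 := by
    intro k l
    have h1 := orthonormal_iff_ite.mp hu_orth k l
    rw [inner_eq_dot'] at h1
    exact h1
  have hu_eig : ∀ k, (A + B).mulVec (u k) = lam k • u k := fun k =>
    hS.mulVec_eigenvectorBasis (σ k)
  -- the families
  set f : Fin r → (Fin n → ℝ) := fun i => ν (i.val + 1) with hf
  have hmemf : ∀ i : Fin r, (i.val + 1) ∈ Finset.Icc 1 n := by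
    intro i; rw [Finset.mem_Icc]; omega
  have hf_dot : ∀ i j : Fin r, f i ⬝ᵥ f j = if i = j then (1:ℝ) else 0 := by
    intro i j
    rw [hortho _ (hmemf i) _ (hmemf j)]
    by_cases h : i = j
    · simp [h]
    · have : (i.val + 1) ≠ (j.val + 1) := by
        intro hh
        exact h (Fin.ext (by omega))
      simp [h, this, Fin.val_inj]
  set fE : Fin r → EuclideanSpace ℝ (Fin n) := fun i => WithLp.toLp 2 (ν (i.val + 1)) with hfE
  have hf_orth : Orthonormal ℝ fE := by
    rw [orthonormal_iff_ite]
    intro i j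
    rw [inner_eq_dot']
    exact hf_dot i j
  set g : Fin (n - r + 1) → (Fin n → ℝ) := fun k => u ⟨k.val, by omega⟩ with hg
  have hemb : Function.Injective (fun k : Fin (n - r + 1) => (⟨k.val, by omega⟩ : Fin n)) := by
    intro a bb hab
    simp only [Fin.mk.injEq] at hab
    exact Fin.ext hab
  have hg_orth : Orthonormal ℝ (fun k : Fin (n - r + 1) => uE ⟨k.val, by omega⟩) :=
    hu_orth.comp _ hemb
  have hg_dot : ∀ k l, g k ⬝ᵥ g l = if k = l then (1:ℝ) else 0 := by
    intro k l
    rw [hg]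
    simp only
    rw [hu_dot]
    by_cases h : k = l
    · simp [h]
    · have : (⟨k.val, by omega⟩ : Fin n) ≠ ⟨l.val, by omega⟩ := by
        intro hh
        simp only [Fin.mk.injEq] at hh
        exact h (Fin.ext hh)
      simp [h, this]
  -- spans
  set V : Submodule ℝ (Fin n → ℝ) := Submodule.span ℝ (Set.range f) with hV
  set W : Submodule ℝ (Fin n → ℝ) := Submodule.span ℝ (Set.range g) with hW
  have hf_li : LinearIndependent ℝ f :=
    hf_orth.linearIndependent.map' (WithLp.linearEquiv 2 ℝ (Fin n → ℝ)).toLinearMap (LinearEquiv.ker _)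
  have hg_li : LinearIndependent ℝ g :=
    hg_orth.linearIndependent.map' (WithLp.linearEquiv 2 ℝ (Fin n → ℝ)).toLinearMap (LinearEquiv.ker _)

  have hVrank : Module.finrank ℝ V = r := by
    rw [hV, finrank_span_eq_card hf_li, Fintype.card_fin]
  have hWrank : Module.finrank ℝ W = n - r + 1 := by
    rw [hW, finrank_span_eq_card hg_li, Fintype.card_fin]
  have hsup : Module.finrank ℝ ↥(V ⊔ W) ≤ n := by
    have h1 := Submodule.finrank_le (V ⊔ W)
    simpa [Module.finrank_fin_fun] using h1
  have hinf : 0 < Module.finrank ℝ ↥(V ⊓ W) := by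
    have h2 := Submodule.finrank_sup_add_finrank_inf_eq V W
    omega
  have hbot : V ⊓ W ≠ ⊥ := by
    intro h
    rw [h, finrank_bot] at hinf
    exact lt_irrefl 0 hinf
  obtain ⟨x, hxVW, hx0⟩ := Submodule.exists_mem_ne_zero_of_ne_bot hbot
  obtain ⟨c, hc⟩ := (Submodule.mem_span_range_iff_exists_fun ℝ).1 (Submodule.mem_inf.1 hxVW).1
  obtain ⟨d, hd⟩ := (Submodule.mem_span_range_iff_exists_fun ℝ).1 (Submodule.mem_inf.1 hxVW).2
  -- norms
  have hxx_pos : 0 < x ⬝ᵥ x := by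
    obtain ⟨i, hi⟩ := Function.ne_iff.1 hx0
    rw [dotProduct]
    exact Finset.sum_pos' (fun j _ => mul_self_nonneg _)
      ⟨i, Finset.mem_univ i, mul_self_pos.2 hi⟩
  have hxxc : x ⬝ᵥ x = ∑ i, c i * c i := by
    conv_lhs => rw [← hc]
    rw [expand_dot']
    rw [collapse' c (fun _ => (1:ℝ)) _ (fun i j => by rw [hf_dot]; ring)]
    simp
  have hxxd : x ⬝ᵥ x = ∑ k, d k * d k := by
    conv_lhs => rw [← hd]
    rw [expand_dot']
    rw [collapse' d (fun _ => (1:ℝ)) _ (fun k l => by rw [hg_dot]; ring)]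
    simp
  -- upper bound via W
  have hupper : x ⬝ᵥ (A + B).mulVec x ≤ mu (A + B) r * (x ⬝ᵥ x) := by
    have hmuAB : mu (A + B) r = lam ⟨n - r, by omega⟩ := mu_eq' _ hS r hr1 hrn
    conv_lhs => rw [← hd, expand_quad']
    rw [collapse' d (fun k => lam ⟨k.val, by omega⟩) _ (fun k l => by
      rw [hu_eig]
      rw [dotProduct_smul]
      rw [hg_dot]
      simp [smul_eq_mul])]
    rw [hxxd, hmuAB, Finset.mul_sum]
    refine Finset.sum_le_sum fun k _ => ?_
    rw [mul_comm (lam _) (d k * d k)]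
    refine mul_le_mul_of_nonneg_left ?_ (mul_self_nonneg _)
    exact hlam_mono (by simp [Fin.mk_le_mk]; omega)
  -- lower bound via V
  have hAq : x ⬝ᵥ A.mulVec x = ∑ i, c i * c i * mu A (i.val + 1) := by
    conv_lhs => rw [← hc, expand_quad']
    exact collapse' c (fun i => mu A (i.val + 1)) _ (fun i j => by
      rw [heig _ (hmemf j), dotProduct_smul, hf_dot]
      simp [smul_eq_mul])
  have hmuA_mono : ∀ i : Fin r, mu A r ≤ mu A (i.val + 1) := by
    intro i
    rw [mu_eq' _ hA r hr1 hrn, mu_eq' _ hA (i.val + 1) (by omega) (by omega)]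
    exact Tuple.monotone_sort hA.eigenvalues (by simp [Fin.mk_le_mk]; omega)
  have hA_lower : mu A r * (x ⬝ᵥ x) ≤ x ⬝ᵥ A.mulVec x := by
    rw [hAq, hxxc, Finset.mul_sum]
    refine Finset.sum_le_sum fun i _ => ?_
    rw [mul_comm (mu A r) (c i * c i)]
    exact mul_le_mul_of_nonneg_left (hmuA_mono i) (mul_self_nonneg _)
  have hB_lower : -((r : ℝ) * b) * (x ⬝ᵥ x) ≤ x ⬝ᵥ B.mulVec x := by
    have hexp : x ⬝ᵥ B.mulVec x = ∑ i, ∑ j, c i * c j * (f i ⬝ᵥ B.mulVec (f j)) := by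
      conv_lhs => rw [← hc, expand_quad']
    have habs : ∀ i j : Fin r, |f i ⬝ᵥ B.mulVec (f j)| ≤ b := by
      intro i j
      exact hbub ⟨i.val + 1, hmemf i, j.val + 1, hmemf j, rfl⟩
    have hterm : ∀ i j : Fin r,
        -(|c i| * |c j| * b) ≤ c i * c j * (f i ⬝ᵥ B.mulVec (f j)) := by
      intro i j
      have h1 : |c i * c j * (f i ⬝ᵥ B.mulVec (f j))| ≤ |c i| * |c j| * b := by
        rw [abs_mul, abs_mul]
        exact mul_le_mul_of_nonneg_left (habs i j)
          (mul_nonneg (abs_nonneg _) (abs_nonneg _))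
      calc -(|c i| * |c j| * b) ≤ -|c i * c j * (f i ⬝ᵥ B.mulVec (f j))| := by linarith
        _ ≤ c i * c j * (f i ⬝ᵥ B.mulVec (f j)) := neg_abs_le _
    have hsum1 : -(b * (∑ i, |c i|) ^ 2) ≤ x ⬝ᵥ B.mulVec x := by
      rw [hexp]
      have hkey : ∑ i, ∑ j, -(|c i| * |c j| * b) = -(b * (∑ i, |c i|) ^ 2) := by
        rw [pow_two, Finset.sum_mul_sum, Finset.mul_sum, ← Finset.sum_neg_distrib]
        refine Finset.sum_congr rfl fun i _ => ?_
        rw [Finset.mul_sum, ← Finset.sum_neg_distrib]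
        exact Finset.sum_congr rfl fun j _ => by ring
      rw [← hkey]
      exact Finset.sum_le_sum fun i _ => Finset.sum_le_sum fun j _ => hterm i j
    have hCS : (∑ i, |c i|) ^ 2 ≤ (r : ℝ) * ∑ i, c i * c i := by
      have h1 := sq_sum_le_card_mul_sum_sq (s := (Finset.univ : Finset (Fin r)))
        (f := fun i => |c i|)
      simp only [Finset.card_univ, Fintype.card_fin, sq_abs] at h1
      calc (∑ i, |c i|) ^ 2 ≤ (r : ℝ) * ∑ i, c i ^ 2 := by exact_mod_cast h1
        _ = (r : ℝ) * ∑ i, c i * c i := by simp [sq]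
    have : -((r : ℝ) * b) * (x ⬝ᵥ x) ≤ -(b * (∑ i, |c i|) ^ 2) := by
      rw [hxxc]
      have := mul_le_mul_of_nonneg_left hCS hbnn
      nlinarith
    linarith
  -- combine
  have hlower : (mu A r - (r : ℝ) * b) * (x ⬝ᵥ x) ≤ x ⬝ᵥ (A + B).mulVec x := by
    have hsplit : x ⬝ᵥ (A + B).mulVec x = x ⬝ᵥ A.mulVec x + x ⬝ᵥ B.mulVec x := by
      rw [Matrix.add_mulVec, dotProduct_add]
    rw [hsplit]
    have := hA_lower
    have := hB_lower
    nlinarith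
  have h3 : (mu A r - (r : ℝ) * b) * (x ⬝ᵥ x) ≤ mu (A + B) r * (x ⬝ᵥ x) :=
    le_trans hlower hupper
  have hfinal : mu A r - (r : ℝ) * b ≤ mu (A + B) r :=
    le_of_mul_le_mul_right h3 hxx_pos
  linarith
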